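/- Let θ(x, y, a₀,…,aₙ) be a quantifier-free formula in the language of linear orders, let a₀ < a₁ < ⋯ < aₙ be natural numbers, and suppose f : ℕ → ℕ is a function such that for all x, y: f(x) = y if and only if (ℕ,<) ⊨ θ(x, y, a₀,…,aₙ). If there exists x₀ > aₙ with f(x₀) ≠ x₀, then f(x₀) < x₀ and moreover f(x) = f(x₀) for all x ≥ x₀ (so f is almost constant). -/

import Mathlib

open FirstOrder FirstOrder.Language

attribute [local instance] FirstOrder.Language.orderStructure

/-- Shift embedding: identity below `c`, add `d` at/above `c`. -/
def shiftEmb (c d : ℕ) : ℕ ↪o ℕ :=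
  OrderEmbedding.ofStrictMono (fun t => if t < c then t else t + d) (by
    intro s t hst
    dsimp only
    split_ifs <;> omega)

lemma qf_realize_orderEmb {α : Type*} (θ : Language.order.Formula α) (hqf : θ.IsQF)
    (g : ℕ ↪o ℕ) (v : α → ℕ) : θ.Realize (⇑g ∘ v) ↔ θ.Realize v := by
  have : Language.order.OrderedStructure ℕ := ⟨fun _ => Iff.rfl⟩
  have h := hqf.realize_embedding g (v := v) (xs := (default : Fin 0 → ℕ))
  unfold Formula.Realize
  convert h using 2

theorem qf_definable_function_almost_constant (n : ℕ) (a : Fin (n + 1) → ℕ)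
    (ha : StrictMono a)
    (θ : Language.order.Formula (Fin (n + 3))) (hqf : θ.IsQF)
    (f : ℕ → ℕ)
    (hθ : ∀ x y : ℕ, f x = y ↔ θ.Realize (Fin.cons x (Fin.cons y (fun i => a i))))
    (x₀ : ℕ) (hx₀ : a (Fin.last n) < x₀) (hfx₀ : f x₀ ≠ x₀) :
    f x₀ < x₀ ∧ ∀ x ≥ x₀, f x = f x₀ := by
  have haub : ∀ i, a i < x₀ := fun i => lt_of_le_of_lt (ha.monotone (Fin.le_last i)) hx₀
  set L := f x₀ with hL
  have hLlt : L < x₀ := by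
    rcases lt_or_gt_of_ne hfx₀ with h | h
    · exact h
    · exfalso
      have h1 : θ.Realize (Fin.cons x₀ (Fin.cons L (fun i => a i))) := (hθ x₀ L).mp rfl
      have hcomp : (⇑(shiftEmb L 1) ∘ Fin.cons x₀ (Fin.cons L (fun i => a i)))
          = Fin.cons x₀ (Fin.cons (L + 1) (fun i => a i)) := by
        funext j
        refine Fin.cases ?_ (fun j => Fin.cases ?_ (fun j => ?_) j) j
        · simp only [shiftEmb, OrderEmbedding.coe_ofStrictMono, Function.comp_apply,
            Fin.cons_zero]
          erw [OrderEmbedding.coe_ofStrictMono]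
          split_ifs <;> omega
        · simp only [shiftEmb, OrderEmbedding.coe_ofStrictMono, Function.comp_apply,
            Fin.cons_zero, Fin.cons_succ]
          erw [OrderEmbedding.coe_ofStrictMono]
          split_ifs <;> omega
        · have hj : a j < x₀ := haub j
          simp only [shiftEmb, OrderEmbedding.coe_ofStrictMono, Function.comp_apply,
            Fin.cons_succ]
          erw [OrderEmbedding.coe_ofStrictMono]
          split_ifs <;> omega
      have h2 : θ.Realize (Fin.cons x₀ (Fin.cons (L + 1) (fun i => a i))) := by
        rw [← hcomp]
        exact (qf_realize_orderEmb θ hqf _ _).mpr h1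
      have := (hθ x₀ (L + 1)).mpr h2
      omega
  refine ⟨hLlt, fun x hx => ?_⟩
  have h1 : θ.Realize (Fin.cons x₀ (Fin.cons L (fun i => a i))) := (hθ x₀ L).mp rfl
  have hcomp : (⇑(shiftEmb x₀ (x - x₀)) ∘ Fin.cons x₀ (Fin.cons L (fun i => a i)))
      = Fin.cons x (Fin.cons L (fun i => a i)) := by
    funext j
    refine Fin.cases ?_ (fun j => Fin.cases ?_ (fun j => ?_) j) j
    · simp only [shiftEmb, OrderEmbedding.coe_ofStrictMono, Function.comp_apply, Fin.cons_zero]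
      erw [OrderEmbedding.coe_ofStrictMono]
      split_ifs <;> omega
    · simp only [shiftEmb, OrderEmbedding.coe_ofStrictMono, Function.comp_apply,
        Fin.cons_zero, Fin.cons_succ]
      erw [OrderEmbedding.coe_ofStrictMono]
      split_ifs <;> omega
    · have hj : a j < x₀ := haub j
      simp only [shiftEmb, OrderEmbedding.coe_ofStrictMono, Function.comp_apply, Fin.cons_succ]
      erw [OrderEmbedding.coe_ofStrictMono]
      split_ifs <;> omega
  have h2 : θ.Realize (Fin.cons x (Fin.cons L (fun i => a i))) := by
    rw [← hcomp]
    exact (qf_realize_orderEmb θ hqf _ _).mpr h1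
  exact (hθ x L).mpr h2
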